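/- arXiv:1708.09748 — 2 statements merged into one kernel-verified Lean document; each statement's English description precedes it below -/
import Mathlib

section
/- Let $\lambda \in \mathbb{C}^*$, $\alpha \in \mathbb{C}$, $h \in \mathbb{C}[t]$. The Virasoro module $\Omega(\lambda,\alpha,h) = \mathbb{C}[t,\partial]$ with action $d_m(\partial^i f) = \lambda^m(\partial-m)^i\big(\partial f + m G(f) - m^2 \alpha F(f)\big)$, $c = 0$, where $F(f) = \frac{h(t)-h(\alpha)}{t-\alpha} f - f'$ and $G(f) = h(\alpha) f + t F(f)$, is simple if and only if $\deg(h) = 1$ and $\alpha \neq 0$. -/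
noncomputable section
open Polynomial

/-- The exact polynomial quotient `(h(t) - h(α)) / (t - α)`. -/
def hquot (h : ℂ[X]) (α : ℂ) : ℂ[X] := (h - C (h.eval α)) /ₘ (X - C α)

/-- `F(f) = ((h(t)-h(α))/(t-α)) f - f'`. -/
def Fop (h : ℂ[X]) (α : ℂ) (f : ℂ[X]) : ℂ[X] := hquot h α * f - derivative f

/-- `G(f) = h(α) f + t F(f)`. -/
def Gop (h : ℂ[X]) (α : ℂ) (f : ℂ[X]) : ℂ[X] := C (h.eval α) * f + X * Fop h α f

/-- The action of `d_m` on `Ω(λ,α,h) = ℂ[t,∂]`, modelled as `(ℂ[t])[∂]`: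
on `∂^i f(t)`, `d_m(∂^i f) = λ^m (∂-m)^i (∂ f + m G(f) - m² α F(f))`,
extended linearly; `c` acts by `0`. -/
def omegaD (lam α : ℂ) (h : ℂ[X]) (m : ℤ) (p : Polynomial ℂ[X]) : Polynomial ℂ[X] :=
  lam ^ m • p.sum fun i f =>
    ((X : Polynomial ℂ[X]) - Polynomial.C (C (m : ℂ))) ^ i *
      ((X : Polynomial ℂ[X]) * Polynomial.C f +
        Polynomial.C (C (m : ℂ) * Gop h α f - C ((m : ℂ) ^ 2 * α) * Fop h α f))

namespace Stmt6


lemma hquot_mul (h : ℂ[X]) (α : ℂ) : (X - C α) * hquot h α = h - C (h.eval α) := by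
  have hm := monic_X_sub_C α
  have hdvd : (X - C α) ∣ (h - C (h.eval α)) := X_sub_C_dvd_sub_C_eval
  have h2 := modByMonic_add_div (h - C (h.eval α)) (X - C α)
  rwa [(modByMonic_eq_zero_iff_dvd hm).2 hdvd, zero_add] at h2

lemma degree_hquot_add_one {h : ℂ[X]} (α : ℂ) (hdeg : 1 ≤ h.degree) :
    1 + (hquot h α).degree = h.degree := by
  calc 1 + (hquot h α).degree = ((X - C α) * hquot h α).degree := by
        rw [degree_mul, degree_X_sub_C]
  _ = (h - C (h.eval α)).degree := by rw [hquot_mul]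
  _ = h.degree := degree_sub_eq_left_of_degree_lt
        (degree_C_le.trans_lt (zero_lt_one.trans_le hdeg))

lemma hquot_eq_C {h : ℂ[X]} (α : ℂ) (hdeg : h.degree = 1) :
    hquot h α = C ((hquot h α).coeff 0) ∧ (hquot h α).coeff 0 ≠ 0 := by
  have h1 : 1 + (hquot h α).degree = 1 := by
    rw [degree_hquot_add_one α hdeg.ge, hdeg]
  have h2 : (hquot h α).degree = 0 := by
    have := WithBot.add_left_cancel (by simp : (1 : WithBot ℕ) ≠ ⊥)
      (by rw [h1, add_zero] : 1 + (hquot h α).degree = 1 + 0)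
    exact this
  have h3 : hquot h α ≠ 0 := fun hq => by simp [hq] at h2
  refine ⟨eq_C_of_degree_le_zero h2.le, fun hc => h3 ?_⟩
  rw [eq_C_of_degree_le_zero h2.le, hc, map_zero]

lemma degree_hquot_pos {h : ℂ[X]} (α : ℂ) (hdeg : 1 < h.degree) :
    0 < (hquot h α).degree := by
  have h1 : 1 + (hquot h α).degree = h.degree :=
    degree_hquot_add_one α hdeg.le
  have h2 : (1 : WithBot ℕ) + 0 < 1 + (hquot h α).degree := by
    rw [h1, add_zero]; exact hdeg
  exact (WithBot.add_lt_add_iff_left (by simp : (1 : WithBot ℕ) ≠ ⊥)).1 h2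

lemma hquot_ne_zero {h : ℂ[X]} (α : ℂ) (hdeg : 1 < h.degree) : hquot h α ≠ 0 := by
  intro hq
  have := degree_hquot_pos α hdeg
  simp [hq] at this

lemma Fop_X_mul (h : ℂ[X]) (α : ℂ) (f : ℂ[X]) :
    Fop h α (X * f) = X * Fop h α f - f := by
  simp only [Fop, derivative_mul, derivative_X, one_mul]
  ring

lemma Fop_zero (h : ℂ[X]) (α : ℂ) : Fop h α 0 = 0 := by simp [Fop]

lemma Gop_zero (h : ℂ[X]) (α : ℂ) : Gop h α 0 = 0 := by simp [Gop, Fop_zero]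

lemma Fop_one (h : ℂ[X]) (α : ℂ) : Fop h α 1 = hquot h α := by simp [Fop]

lemma Fop_ne_zero {h : ℂ[X]} {α : ℂ} {a : ℂ} (hq : hquot h α = C a) (ha : a ≠ 0)
    {f : ℂ[X]} (hf : f ≠ 0) : Fop h α f ≠ 0 := by
  have hdlt : (derivative f).degree < (hquot h α * f).degree := by
    rw [hq, degree_C_mul ha]
    exact degree_derivative_lt hf
  have : (Fop h α f).degree = (hquot h α * f).degree :=
    degree_sub_eq_left_of_degree_lt hdlt
  intro h0
  rw [h0, degree_zero, hq, degree_C_mul ha] at this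
  exact hf (degree_eq_bot.1 this.symm)




def Tpoly (h : ℂ[X]) (α : ℂ) (p : Polynomial ℂ[X]) : Polynomial (Polynomial ℂ[X]) :=
  p.sum fun i f =>
    (Polynomial.C ((X : Polynomial ℂ[X])) - X) ^ i *
      (Polynomial.C ((X : Polynomial ℂ[X]) * Polynomial.C f)
        + X * Polynomial.C (Polynomial.C (Gop h α f))
        - X ^ 2 * Polynomial.C (Polynomial.C (C α * Fop h α f)))

lemma omegaD_eq (lam α : ℂ) (h : ℂ[X]) (m : ℤ) (p : Polynomial ℂ[X]) :
    omegaD lam α h m p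
      = lam ^ m • (Tpoly h α p).eval (Polynomial.C (C ((m : ℤ) : ℂ))) := by
  unfold omegaD Tpoly
  congr 1
  rw [Polynomial.sum_def, Polynomial.sum_def, eval_finset_sum]
  apply Finset.sum_congr rfl
  intro i _
  simp only [eval_mul, eval_pow, eval_sub, eval_add, eval_C, eval_X, map_sub, map_mul, map_pow]
  ring

lemma omegaD_zero (lam α : ℂ) (h : ℂ[X]) (p : Polynomial ℂ[X]) :
    omegaD lam α h 0 p = X * p := by
  unfold omegaD
  rw [zpow_zero, one_smul]
  have h1 : (p.sum fun i f =>
      ((X : Polynomial ℂ[X]) - Polynomial.C (C ((0:ℤ) : ℂ))) ^ i *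
      ((X : Polynomial ℂ[X]) * Polynomial.C f +
        Polynomial.C (C ((0:ℤ) : ℂ) * Gop h α f - C (((0:ℤ) : ℂ) ^ 2 * α) * Fop h α f)))
      = p.sum fun i f => X * (Polynomial.C f * X ^ i) := by
    rw [Polynomial.sum_def, Polynomial.sum_def]
    apply Finset.sum_congr rfl
    intro i _
    simp only [Int.cast_zero, map_zero, zero_mul, sub_zero, ne_eq, OfNat.ofNat_ne_zero,
      not_false_eq_true, zero_pow, add_zero, map_zero]
    ring
  rw [h1, Polynomial.sum_def, ← Finset.mul_sum]
  exact congrArg (X * ·) (by conv_rhs => rw [← Polynomial.sum_C_mul_X_pow_eq p, Polynomial.sum_def])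

lemma coeff_mem_of_eval_mem (W : Submodule ℂ (Polynomial ℂ[X]))
    (P : Polynomial (Polynomial ℂ[X]))
    (hP : ∀ m : ℤ, P.eval (Polynomial.C (C ((m : ℤ) : ℂ))) ∈ W) (j : ℕ) :
    P.coeff j ∈ W := by
  classical
  by_cases hj : j ∈ P.support
  case neg => rw [notMem_support_iff.mp hj]; exact W.zero_mem
  have key : ∀ φ : Module.Dual ℂ (Polynomial ℂ[X] ⧸ W), φ (W.mkQ (P.coeff j)) = 0 := by
    intro φ
    set s : ℂ[X] := ∑ i ∈ P.support, C (φ (W.mkQ (P.coeff i))) * X ^ i with hs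
    have hseval : ∀ z : ℂ, s.eval z = φ (W.mkQ (P.eval (Polynomial.C (C z)))) := by
      intro z
      rw [hs, eval_finset_sum, Polynomial.eval_eq_sum, Polynomial.sum_def, map_sum, map_sum]
      apply Finset.sum_congr rfl
      intro i _
      rw [eval_mul, eval_C, eval_pow, eval_X]
      have hsm : P.coeff i * (Polynomial.C (C z)) ^ i = (z ^ i) • P.coeff i := by
        rw [Algebra.smul_def, Polynomial.algebraMap_apply, Polynomial.algebraMap_eq,
          map_pow, map_pow, mul_comm]
      rw [hsm, map_smul, map_smul, smul_eq_mul, mul_comm]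
    have hroot : {x : ℂ | s.IsRoot x}.Infinite := by
      apply Set.Infinite.mono _ (Set.infinite_range_of_injective
        (f := fun m : ℤ => (m : ℂ)) (fun a b hab => Int.cast_injective hab))
      rintro x ⟨m, rfl⟩
      show s.IsRoot _
      rw [IsRoot.def, hseval]
      have hm := hP m
      rw [show W.mkQ (P.eval (Polynomial.C (C ((m : ℤ) : ℂ)))) = 0 from
        (Submodule.Quotient.mk_eq_zero W).2 hm, map_zero]
    have hs0 : s = 0 := Polynomial.eq_zero_of_infinite_isRoot s hroot
    have hc := congrArg (fun q => Polynomial.coeff q j) hs0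
    simp only [hs, finset_sum_coeff, coeff_C_mul, coeff_X_pow, coeff_zero,
      mul_ite, mul_one, mul_zero] at hc
    rwa [Finset.sum_ite_eq P.support j (fun i => φ (W.mkQ (P.coeff i))), if_pos hj] at hc
  have := (Module.forall_dual_apply_eq_zero_iff ℂ (W.mkQ (P.coeff j))).1 key
  rwa [Submodule.mkQ_apply, Submodule.Quotient.mk_eq_zero] at this


lemma Tpoly_C (h : ℂ[X]) (α : ℂ) (g : ℂ[X]) :
    Tpoly h α (Polynomial.C g)
      = Polynomial.C ((X : Polynomial ℂ[X]) * Polynomial.C g)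
        + X * Polynomial.C (Polynomial.C (Gop h α g))
        - X ^ 2 * Polynomial.C (Polynomial.C (C α * Fop h α g)) := by
  unfold Tpoly
  rw [Polynomial.sum_C_index (by simp [Fop_zero, Gop_zero]; exact sub_self (0 : ℂ[X][X][X]))]
  rw [pow_zero, one_mul]

lemma Tpoly_C_coeff_one (h : ℂ[X]) (α : ℂ) (g : ℂ[X]) :
    (Tpoly h α (Polynomial.C g)).coeff 1 = Polynomial.C (Gop h α g) := by
  rw [Tpoly_C]
  rw [coeff_sub, coeff_add, coeff_C, if_neg one_ne_zero,
    mul_comm (X : Polynomial (Polynomial ℂ[X]))]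
  rw [show (1:ℕ) = 0 + 1 from rfl, coeff_mul_X, coeff_C, if_pos rfl]
  rw [mul_comm ((X : Polynomial (Polynomial ℂ[X]))^2), coeff_mul_X_pow']
  simp

lemma Tpoly_C_coeff_two (h : ℂ[X]) (α : ℂ) (g : ℂ[X]) :
    (Tpoly h α (Polynomial.C g)).coeff 2 = - Polynomial.C (C α * Fop h α g) := by
  rw [Tpoly_C]
  rw [coeff_sub, coeff_add, coeff_C, if_neg (by norm_num),
    mul_comm (X : Polynomial (Polynomial ℂ[X]))]
  rw [show (2:ℕ) = 1 + 1 from rfl, coeff_mul_X, coeff_C, if_neg one_ne_zero]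
  rw [mul_comm ((X : Polynomial (Polynomial ℂ[X]))^2), coeff_mul_X_pow]
  simp

lemma neg_one_pow_smul (k : ℕ) (v : Polynomial ℂ[X]) :
    ((-1 : ℂ) ^ k) • v = (-1 : Polynomial ℂ[X]) ^ k * v := by
  rw [Algebra.smul_def, map_pow, map_neg, map_one]

lemma natDegree_CX_sub_X_pow_le (i : ℕ) :
    ((Polynomial.C ((X : Polynomial ℂ[X])) - X) ^ i).natDegree ≤ i := by
  refine natDegree_pow_le.trans ?_
  have h1 : ((Polynomial.C ((X : Polynomial ℂ[X])) - X)).natDegree ≤ 1 :=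
    (natDegree_sub_le _ _).trans (by simp)
  calc i * ((Polynomial.C ((X : Polynomial ℂ[X])) - X)).natDegree
      ≤ i * 1 := Nat.mul_le_mul_left i h1
  _ = i := mul_one i

lemma natDegree_B12_le (f : ℂ[X]) (u : Polynomial ℂ[X]) :
    (Polynomial.C ((X : Polynomial ℂ[X]) * Polynomial.C f)
      + X * Polynomial.C u).natDegree ≤ 1 := by
  refine (natDegree_add_le _ _).trans ?_
  simp only [natDegree_C, sup_le_iff]
  exact ⟨Nat.zero_le 1, natDegree_mul_le.trans (by simp)⟩

lemma Tpoly_coeff_top (h : ℂ[X]) (α : ℂ) {p : Polynomial ℂ[X]} (hp : p ≠ 0) :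
    (Tpoly h α p).coeff (p.natDegree + 2)
      = ((-1 : ℂ) ^ (p.natDegree + 1)) •
          Polynomial.C (C α * Fop h α (p.coeff p.natDegree)) := by
  classical
  set n := p.natDegree with hn
  unfold Tpoly
  rw [Polynomial.sum_def, finset_sum_coeff]
  rw [Finset.sum_eq_single n]
  · rw [show (Polynomial.C ((X : Polynomial ℂ[X])) - X) ^ n *
        (Polynomial.C ((X : Polynomial ℂ[X]) * Polynomial.C (p.coeff n))
          + X * Polynomial.C (Polynomial.C (Gop h α (p.coeff n)))
          - X ^ 2 * Polynomial.C (Polynomial.C (C α * Fop h α (p.coeff n))))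
        = (Polynomial.C ((X : Polynomial ℂ[X])) - X) ^ n *
            (Polynomial.C ((X : Polynomial ℂ[X]) * Polynomial.C (p.coeff n))
              + X * Polynomial.C (Polynomial.C (Gop h α (p.coeff n))))
          - X ^ 2 * ((Polynomial.C ((X : Polynomial ℂ[X])) - X) ^ n *
              Polynomial.C (Polynomial.C (C α * Fop h α (p.coeff n)))) from by ring]
    rw [coeff_sub]
    have h1 : ((Polynomial.C ((X : Polynomial ℂ[X])) - X) ^ n *
        (Polynomial.C ((X : Polynomial ℂ[X]) * Polynomial.C (p.coeff n))
          + X * Polynomial.C (Polynomial.C (Gop h α (p.coeff n))))).coeff (n + 2) = 0 := by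
      apply coeff_eq_zero_of_natDegree_lt
      have := natDegree_mul_le.trans
        (add_le_add (natDegree_CX_sub_X_pow_le n)
          (natDegree_B12_le (p.coeff n) (Polynomial.C (Gop h α (p.coeff n)))))
      omega
    rw [h1, zero_sub, coeff_X_pow_mul, coeff_mul_C]
    have hcn : ((Polynomial.C ((X : Polynomial ℂ[X])) - X) ^ n).coeff n
        = (-1 : Polynomial ℂ[X]) ^ n := by
      have hb : (Polynomial.C ((X : Polynomial ℂ[X])) - X)
          = -(X - Polynomial.C ((X : Polynomial ℂ[X]))) := by ring
      have hnd : (Polynomial.C ((X : Polynomial ℂ[X])) - X).natDegree = 1 := by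
        rw [hb, natDegree_neg, natDegree_X_sub_C]
      have hlc : (Polynomial.C ((X : Polynomial ℂ[X])) - X).leadingCoeff = -1 := by
        rw [leadingCoeff, hnd, hb, coeff_neg, coeff_sub, coeff_X_one, coeff_C,
          if_neg one_ne_zero, sub_zero]
      have h3 : ((Polynomial.C ((X : Polynomial ℂ[X])) - X) ^ n).leadingCoeff
          = (-1 : Polynomial ℂ[X]) ^ n := by rw [leadingCoeff_pow, hlc]
      have h4 : ((Polynomial.C ((X : Polynomial ℂ[X])) - X) ^ n).natDegree = n := by
        rw [natDegree_pow, hnd, mul_one]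
      calc ((Polynomial.C ((X : Polynomial ℂ[X])) - X) ^ n).coeff n
          = ((Polynomial.C ((X : Polynomial ℂ[X])) - X) ^ n).coeff
              (((Polynomial.C ((X : Polynomial ℂ[X])) - X) ^ n).natDegree) := by rw [h4]
      _ = ((Polynomial.C ((X : Polynomial ℂ[X])) - X) ^ n).leadingCoeff := rfl
      _ = (-1 : Polynomial ℂ[X]) ^ n := h3
    rw [hcn, neg_one_pow_smul, pow_succ]
    ring
  · intro i hi hine
    beta_reduce
    apply coeff_eq_zero_of_natDegree_lt
    have hile : i ≤ n := le_natDegree_of_mem_supp i hi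
    have hilt : i < n := lt_of_le_of_ne hile hine
    have hBle : (Polynomial.C ((X : Polynomial ℂ[X]) * Polynomial.C (p.coeff i))
        + X * Polynomial.C (Polynomial.C (Gop h α (p.coeff i)))
        - X ^ 2 * Polynomial.C (Polynomial.C (C α * Fop h α (p.coeff i)))).natDegree ≤ 2 := by
      refine (natDegree_sub_le _ _).trans ?_
      simp only [sup_le_iff]
      refine ⟨(natDegree_B12_le _ _).trans one_le_two,
        natDegree_mul_le.trans (by rw [natDegree_X_pow, natDegree_C])⟩
    have := natDegree_mul_le.trans (add_le_add (natDegree_CX_sub_X_pow_le i) hBle)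
    omega
  · intro hns
    exact absurd (natDegree_mem_support_of_nonzero hp) hns



def Wof (V : Submodule ℂ ℂ[X]) : Submodule ℂ (Polynomial ℂ[X]) where
  carrier := {p | ∀ i, p.coeff i ∈ V}
  add_mem' := fun ha hb i => by rw [coeff_add]; exact add_mem (ha i) (hb i)
  zero_mem' := fun i => by rw [coeff_zero]; exact zero_mem V
  smul_mem' := fun c p hp i => by rw [coeff_smul]; exact Submodule.smul_mem V c (hp i)

lemma mem_Wof {V : Submodule ℂ ℂ[X]} {p : Polynomial ℂ[X]} :
    p ∈ Wof V ↔ ∀ i, p.coeff i ∈ V := Iff.rfl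

lemma Wof_invariant (lam α : ℂ) (h : ℂ[X]) (V : Submodule ℂ ℂ[X])
    (hG : ∀ f ∈ V, Gop h α f ∈ V) (hF : ∀ f ∈ V, α • Fop h α f ∈ V) :
    ∀ (m : ℤ) (w : Polynomial ℂ[X]), w ∈ Wof V → omegaD lam α h m w ∈ Wof V := by
  intro m w hw
  rw [mem_Wof]
  intro j
  unfold omegaD
  rw [coeff_smul]
  apply Submodule.smul_mem
  rw [Polynomial.sum_def, finset_sum_coeff]
  apply Submodule.sum_mem
  intro i _
  have hB : ∀ l : ℕ, ((X : Polynomial ℂ[X]) * Polynomial.C (w.coeff i) +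
      Polynomial.C (C ((m:ℤ) : ℂ) * Gop h α (w.coeff i)
        - C (((m:ℤ) : ℂ) ^ 2 * α) * Fop h α (w.coeff i))).coeff l ∈ V := by
    intro l
    match l with
    | 0 =>
      rw [coeff_add, mul_comm, mul_coeff_zero, coeff_X_zero, mul_zero, zero_add, coeff_C,
        if_pos rfl]
      have hc : C ((m:ℤ) : ℂ) * Gop h α (w.coeff i)
          - C (((m:ℤ) : ℂ) ^ 2 * α) * Fop h α (w.coeff i)
          = ((m:ℤ) : ℂ) • Gop h α (w.coeff i)
            - (((m:ℤ) : ℂ) ^ 2) • (α • Fop h α (w.coeff i)) := by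
        rw [smul_smul, smul_eq_C_mul, smul_eq_C_mul]
      rw [hc]
      exact sub_mem (Submodule.smul_mem V _ (hG _ (hw i)))
        (Submodule.smul_mem V _ (hF _ (hw i)))
    | 1 =>
      rw [coeff_add, coeff_C, if_neg one_ne_zero, add_zero, mul_comm,
        show (1:ℕ) = 0 + 1 from rfl, coeff_mul_X, coeff_C, if_pos rfl]
      exact hw i
    | (l' + 2) =>
      rw [coeff_add, coeff_C, if_neg (by omega), add_zero, mul_comm,
        show (l' + 2 : ℕ) = (l' + 1) + 1 from rfl, coeff_mul_X, coeff_C, if_neg (by omega)]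
      exact zero_mem V
  have hA : ∀ k : ℕ, (((X : Polynomial ℂ[X]) - Polynomial.C (C ((m:ℤ) : ℂ))) ^ i).coeff k
      = C ((((X : ℂ[X]) - C ((m:ℤ) : ℂ)) ^ i).coeff k) := by
    intro k
    rw [show ((X : Polynomial ℂ[X]) - Polynomial.C (C ((m:ℤ) : ℂ))) ^ i
        = Polynomial.map (C : ℂ →+* ℂ[X]) (((X : ℂ[X]) - C ((m:ℤ) : ℂ)) ^ i) from by
      rw [Polynomial.map_pow, Polynomial.map_sub, map_X, map_C], coeff_map]
  rw [coeff_mul]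
  apply Submodule.sum_mem
  intro kl _
  rw [hA kl.1, ← smul_eq_C_mul]
  exact Submodule.smul_mem V _ (hB kl.2)


lemma simple_of (lam : ℂ) (hlam : lam ≠ 0) {α : ℂ} {h : ℂ[X]} (hα : α ≠ 0)
    (hdeg : h.degree = 1) (W : Submodule ℂ (Polynomial ℂ[X]))
    (hWinv : ∀ (m : ℤ) (w : Polynomial ℂ[X]), w ∈ W → omegaD lam α h m w ∈ W)
    (hne : W ≠ ⊥) : W = ⊤ := by
  obtain ⟨hqC, ha⟩ := hquot_eq_C (h := h) α hdeg
  set a := (hquot h α).coeff 0 with haq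
  have hT : ∀ w ∈ W, ∀ j, (Tpoly h α w).coeff j ∈ W := by
    intro w hw j
    refine coeff_mem_of_eval_mem W _ (fun m => ?_) j
    have h1 := hWinv m w hw
    rw [omegaD_eq] at h1
    exact (Submodule.smul_mem_iff W (zpow_ne_zero m hlam)).1 h1
  have hX : ∀ w ∈ W, (X : Polynomial ℂ[X]) * w ∈ W := by
    intro w hw
    have h1 := hWinv 0 w hw
    rwa [omegaD_zero] at h1
  have hGW : ∀ g : ℂ[X], Polynomial.C g ∈ W → Polynomial.C (Gop h α g) ∈ W := by
    intro g hg
    have h1 := hT _ hg 1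
    rwa [Tpoly_C_coeff_one] at h1
  have hFW : ∀ g : ℂ[X], Polynomial.C g ∈ W → Polynomial.C (Fop h α g) ∈ W := by
    intro g hg
    have h1 := hT _ hg 2
    rw [Tpoly_C_coeff_two] at h1
    have h2 : Polynomial.C (C α * Fop h α g) ∈ W := by
      have h2' := W.neg_mem h1; rwa [neg_neg] at h2'
    have h3 : α • Polynomial.C (Fop h α g) ∈ W := by
      rwa [Polynomial.smul_C, smul_eq_C_mul]
    exact (Submodule.smul_mem_iff W hα).1 h3
  have hsmulW : ∀ (c : ℂ) (g : ℂ[X]), Polynomial.C g ∈ W → Polynomial.C (c • g) ∈ W := by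
    intro c g hg
    rw [← Polynomial.smul_C]
    exact Submodule.smul_mem W c hg
  have hDW : ∀ g : ℂ[X], Polynomial.C g ∈ W → Polynomial.C (derivative g) ∈ W := by
    intro g hg
    have hid : derivative g = a • g - Fop h α g := by
      rw [Fop, hqC, smul_eq_C_mul]; ring
    rw [hid, map_sub]
    exact sub_mem (hsmulW a g hg) (hFW g hg)
  obtain ⟨p, hpW, hp0⟩ := (Submodule.ne_bot_iff W).1 hne
  have htop := hT p hpW (p.natDegree + 2)
  rw [Tpoly_coeff_top h α hp0] at htop
  have h2 : Polynomial.C (C α * Fop h α (p.coeff p.natDegree)) ∈ W :=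
    (Submodule.smul_mem_iff W (pow_ne_zero _ (neg_ne_zero.2 one_ne_zero))).1 htop
  have h3 : Polynomial.C (Fop h α (p.coeff p.natDegree)) ∈ W := by
    have h4 : α • Polynomial.C (Fop h α (p.coeff p.natDegree)) ∈ W := by
      rwa [Polynomial.smul_C, smul_eq_C_mul]
    exact (Submodule.smul_mem_iff W hα).1 h4
  have hg0ne : Fop h α (p.coeff p.natDegree) ≠ 0 :=
    Fop_ne_zero hqC ha (Polynomial.leadingCoeff_ne_zero.mpr hp0)
  have hone : ∀ N : ℕ, ∀ g : ℂ[X], g ≠ 0 → g.natDegree ≤ N → Polynomial.C g ∈ W →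
      Polynomial.C (1 : ℂ[X]) ∈ W := by
    intro N
    induction N with
    | zero =>
      intro g hgne hdg hgW
      have hgc : g = C (g.coeff 0) := eq_C_of_natDegree_le_zero hdg
      have hc0 : g.coeff 0 ≠ 0 := fun hcc => hgne (by rw [hgc, hcc, map_zero])
      have h5 := hsmulW (g.coeff 0)⁻¹ g hgW
      have hid : (g.coeff 0)⁻¹ • g = 1 := by
        nth_rewrite 2 [hgc]
        rw [Polynomial.smul_C, smul_eq_mul, inv_mul_cancel₀ hc0, map_one]
      rwa [hid] at h5
    | succ k ih =>
      intro g hgne hdg hgW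
      by_cases hk : g.natDegree ≤ k
      · exact ih g hgne hk hgW
      · have hd0 : g.natDegree ≠ 0 := by omega
        have hder : derivative g ≠ 0 := by
          intro hd
          have hcoef := Polynomial.coeff_derivative g (g.natDegree - 1)
          have hn1 : g.natDegree - 1 + 1 = g.natDegree := by omega
          rw [hd, coeff_zero, hn1] at hcoef
          exact (mul_ne_zero (Polynomial.leadingCoeff_ne_zero.mpr hgne)
            (Nat.cast_add_one_ne_zero _)) hcoef.symm
        have hdlt : (derivative g).natDegree ≤ k := by
          have := Polynomial.natDegree_derivative_lt hd0; omega
        exact ih (derivative g) hder hdlt (hDW g hgW)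
  have h1W : Polynomial.C (1 : ℂ[X]) ∈ W := hone _ _ hg0ne le_rfl h3
  have hmono : ∀ n : ℕ, Polynomial.C ((X : ℂ[X]) ^ n) ∈ W := by
    intro n
    induction n with
    | zero => simpa using h1W
    | succ k ihk =>
      have hXF : Polynomial.C ((X : ℂ[X]) * Fop h α ((X : ℂ[X]) ^ k)) ∈ W := by
        have hid : (X : ℂ[X]) * Fop h α ((X : ℂ[X]) ^ k)
            = Gop h α ((X : ℂ[X]) ^ k) - (h.eval α) • ((X : ℂ[X]) ^ k) := by
          rw [Gop, smul_eq_C_mul]; ring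
        rw [hid, map_sub]
        exact sub_mem (hGW _ ihk) (hsmulW _ _ ihk)
      have hid2 : (X : ℂ[X]) * Fop h α ((X : ℂ[X]) ^ k)
          = a • ((X : ℂ[X]) ^ (k + 1)) - (k : ℂ) • ((X : ℂ[X]) ^ k) := by
        rw [Fop, hqC, derivative_X_pow, smul_eq_C_mul, smul_eq_C_mul]
        cases k with
        | zero => simp
        | succ j =>
          rw [show (j + 1) - 1 = j from rfl]
          push_cast
          ring
      have hsum : Polynomial.C (a • ((X : ℂ[X]) ^ (k + 1))) ∈ W := by
        have hid3 : a • ((X : ℂ[X]) ^ (k + 1))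
            = (X : ℂ[X]) * Fop h α ((X : ℂ[X]) ^ k) + (k : ℂ) • ((X : ℂ[X]) ^ k) := by
          rw [hid2]; ring
        rw [hid3, map_add]
        exact W.add_mem hXF (hsmulW _ _ ihk)
      have h6 := hsmulW a⁻¹ _ hsum
      rwa [inv_smul_smul₀ ha] at h6
  have hpure : ∀ g : ℂ[X], Polynomial.C g ∈ W := by
    intro g
    have hrep : Polynomial.C g
        = ∑ n ∈ g.support, (g.coeff n) • Polynomial.C ((X : ℂ[X]) ^ n) := by
      conv_lhs => rw [← Polynomial.sum_C_mul_X_pow_eq g]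
      rw [Polynomial.sum_def, map_sum]
      apply Finset.sum_congr rfl
      intro n _
      rw [← smul_eq_C_mul, Polynomial.smul_C]
    rw [hrep]
    exact Submodule.sum_mem W (fun n _ => Submodule.smul_mem W _ (hmono n))
  have hXpow : ∀ (i : ℕ) (g : ℂ[X]), (X : Polynomial ℂ[X]) ^ i * Polynomial.C g ∈ W := by
    intro i
    induction i with
    | zero => intro g; simpa using hpure g
    | succ k ihk =>
      intro g
      have h7 := hX _ (ihk g)
      rwa [show (X : Polynomial ℂ[X]) * ((X : Polynomial ℂ[X]) ^ k * Polynomial.C g)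
          = (X : Polynomial ℂ[X]) ^ (k + 1) * Polynomial.C g from by ring] at h7
  rw [eq_top_iff]
  intro p _
  have hrep : p = ∑ n ∈ p.support,
      (X : Polynomial ℂ[X]) ^ n * Polynomial.C (p.coeff n) := by
    conv_lhs => rw [← Polynomial.sum_C_mul_X_pow_eq p]
    rw [Polynomial.sum_def]
    apply Finset.sum_congr rfl
    intro n _
    ring
  rw [hrep]
  exact Submodule.sum_mem W (fun n _ => hXpow n _)

end Stmt6

open Stmt6 in
/-- For `λ ∈ ℂ*`, `α ∈ ℂ`, `h ∈ ℂ[t]`, the Virasoro module `Ω(λ,α,h)` is simple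
(its only subspaces invariant under all the operators `d_m`, `m ∈ ℤ`, are `0` and the
whole module; the condition on `c` is vacuous since `c` acts by `0`) if and only if
`deg h = 1` and `α ≠ 0`. -/
theorem stmt6 (lam : ℂ) (hlam : lam ≠ 0) (α : ℂ) (h : ℂ[X]) :
    (∀ W : Submodule ℂ (Polynomial ℂ[X]),
        (∀ (m : ℤ) (w : Polynomial ℂ[X]), w ∈ W → omegaD lam α h m w ∈ W) →
      W = ⊥ ∨ W = ⊤) ↔ (h.degree = 1 ∧ α ≠ 0) := by
  constructor
  · intro hsimple
    have hα : α ≠ 0 := by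
      intro hα0
      subst hα0
      set V₁ : Submodule ℂ ℂ[X] := LinearMap.ker (Polynomial.leval (0 : ℂ)) with hV₁
      have hmemV₁ : ∀ f : ℂ[X], f ∈ V₁ ↔ f.eval 0 = 0 := by
        intro f; rw [hV₁, LinearMap.mem_ker, Polynomial.leval_apply]
      have hG : ∀ f ∈ V₁, Gop h 0 f ∈ V₁ := by
        intro f hf
        rw [hmemV₁] at hf ⊢
        simp [Gop, hf]
      have hF : ∀ f ∈ V₁, (0 : ℂ) • Fop h 0 f ∈ V₁ := by
        intro f _
        rw [zero_smul]; exact zero_mem V₁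
      rcases hsimple (Wof V₁) (Wof_invariant lam 0 h V₁ hG hF) with hbot | htop
      · have hmem : Polynomial.C (X : ℂ[X]) ∈ Wof V₁ := by
          rw [mem_Wof]
          intro i
          rw [coeff_C]
          rcases eq_or_ne i 0 with rfl | hi
          · rw [if_pos rfl, hmemV₁]; simp
          · rw [if_neg hi]; exact zero_mem V₁
        rw [hbot, Submodule.mem_bot] at hmem
        exact X_ne_zero (Polynomial.C_eq_zero.1 hmem)
      · have hmem : (1 : Polynomial ℂ[X]) ∈ Wof V₁ := htop ▸ Submodule.mem_top
        have h1 := (mem_Wof.1 hmem) 0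
        rw [coeff_one, if_pos rfl, hmemV₁] at h1
        simp at h1
    refine ⟨?_, hα⟩
    by_contra hdeg
    rcases lt_trichotomy h.degree 1 with hlt | heq | hgt
    · -- h is constant
      have hCc : h = C (h.coeff 0) :=
        eq_C_of_degree_le_zero (Nat.WithBot.lt_one_iff_le_zero.1 hlt)
      have hconst : hquot h α = 0 := by
        rw [hquot, show h - C (h.eval α) = 0 from by
          conv_lhs => rw [hCc]
          rw [hCc, eval_C, sub_self], Polynomial.zero_divByMonic]
      set V₂ : Submodule ℂ ℂ[X] :=
        LinearMap.ker (Polynomial.derivative : ℂ[X] →ₗ[ℂ] ℂ[X]) with hV₂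
      have hmemV₂ : ∀ f : ℂ[X], f ∈ V₂ ↔ derivative f = 0 := by
        intro f; rw [hV₂, LinearMap.mem_ker]
      have hFz : ∀ f ∈ V₂, Fop h α f = 0 := by
        intro f hf
        rw [hmemV₂] at hf
        rw [Fop, hconst, zero_mul, hf, sub_zero]
      have hG : ∀ f ∈ V₂, Gop h α f ∈ V₂ := by
        intro f hf
        have hf' := (hmemV₂ f).1 hf
        rw [hmemV₂, Gop, hFz f hf, mul_zero, add_zero, derivative_C_mul, hf', mul_zero]
      have hF : ∀ f ∈ V₂, α • Fop h α f ∈ V₂ := by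
        intro f hf
        rw [hFz f hf, smul_zero]; exact zero_mem V₂
      rcases hsimple (Wof V₂) (Wof_invariant lam α h V₂ hG hF) with hbot | htop
      · have hmem : (1 : Polynomial ℂ[X]) ∈ Wof V₂ := by
          rw [mem_Wof]
          intro i
          rw [coeff_one]
          rcases eq_or_ne i 0 with rfl | hi
          · rw [if_pos rfl, hmemV₂, derivative_one]
          · rw [if_neg hi]; exact zero_mem V₂
        rw [hbot, Submodule.mem_bot] at hmem
        exact one_ne_zero hmem
      · have hmem : Polynomial.C (X : ℂ[X]) ∈ Wof V₂ := htop ▸ Submodule.mem_top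
        have h1 := (mem_Wof.1 hmem) 0
        rw [coeff_C, if_pos rfl, hmemV₂, derivative_X] at h1
        exact one_ne_zero h1
    · exact hdeg heq
    · -- deg h ≥ 2
      have hq1 := degree_hquot_pos (h := h) α hgt
      have hqne := hquot_ne_zero (h := h) α hgt
      set Flin : ℂ[X] →ₗ[ℂ] ℂ[X] :=
        { toFun := Fop h α
          map_add' := fun f g => by
            simp only [Fop, mul_add, derivative_add]; ring
          map_smul' := fun c f => by
            simp only [Fop, derivative_smul, RingHom.id_apply, smul_sub, mul_smul_comm] }
        with hFlin
      set V₃ : Submodule ℂ ℂ[X] := LinearMap.range Flin with hV₃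
      have hFmem : ∀ f : ℂ[X], Fop h α f ∈ V₃ := fun f => ⟨f, rfl⟩
      have hG : ∀ f ∈ V₃, Gop h α f ∈ V₃ := by
        intro f hf
        have hid : Gop h α f = (h.eval α) • f + (Fop h α ((X : ℂ[X]) * f) + f) := by
          rw [Gop, Fop_X_mul, smul_eq_C_mul]; ring
        rw [hid]
        exact add_mem (Submodule.smul_mem V₃ _ hf) (add_mem (hFmem _) hf)
      have hF : ∀ f ∈ V₃, α • Fop h α f ∈ V₃ := by
        intro f _
        exact Submodule.smul_mem V₃ _ (hFmem f)
      have hFop_ne_one : ∀ u : ℂ[X], Fop h α u ≠ 1 := by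
        intro u hu
        rcases eq_or_ne u 0 with rfl | hu0
        · rw [Fop_zero] at hu; exact one_ne_zero hu.symm
        · have hdd : (derivative u).degree < (hquot h α * u).degree := by
            calc (derivative u).degree < u.degree := degree_derivative_lt hu0
            _ = 0 + u.degree := (zero_add _).symm
            _ ≤ (hquot h α).degree + u.degree := add_le_add_left hq1.le _
            _ = (hquot h α * u).degree := (degree_mul).symm
          have hFdeg : (Fop h α u).degree = (hquot h α).degree + u.degree := by
            rw [Fop, degree_sub_eq_left_of_degree_lt hdd, degree_mul]
          rw [hu, degree_one] at hFdeg
          have hpos : (0 : WithBot ℕ) < (hquot h α).degree + u.degree :=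
            lt_of_lt_of_le hq1 (le_add_of_nonneg_right (Polynomial.zero_le_degree_iff.2 hu0))
          rw [← hFdeg] at hpos
          exact lt_irrefl _ hpos
      rcases hsimple (Wof V₃) (Wof_invariant lam α h V₃ hG hF) with hbot | htop
      · have hmem : Polynomial.C (hquot h α) ∈ Wof V₃ := by
          rw [mem_Wof]
          intro i
          rw [coeff_C]
          rcases eq_or_ne i 0 with rfl | hi
          · rw [if_pos rfl, ← Fop_one h α]; exact hFmem 1
          · rw [if_neg hi]; exact zero_mem V₃
        rw [hbot, Submodule.mem_bot] at hmem
        exact hqne (Polynomial.C_eq_zero.1 hmem)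
      · have hmem : (1 : Polynomial ℂ[X]) ∈ Wof V₃ := htop ▸ Submodule.mem_top
        have h1 := (mem_Wof.1 hmem) 0
        rw [coeff_one, if_pos rfl] at h1
        obtain ⟨u, hu⟩ := h1
        exact hFop_ne_one u hu
  · rintro ⟨hdeg, hα⟩ W hWinv
    rcases eq_or_ne W ⊥ with hb | hb
    · exact Or.inl hb
    · exact Or.inr (simple_of lam hlam hα hdeg W hWinv hb)
end
end

section
/- With notation as above, for $m \in \mathbb{Z}_{\geq 0}$ (setting $W_{-1} = 0$), the quotient Virasoro module $\overline{W}_m = W_m / W_{m-1}$ is isomorphic to the Virasoro module $\Omega(\lambda, \alpha, h - m - \beta)$, via the map sending $\partial_1^m (\partial_1+\partial_2)^n f + W_{m-1} \mapsto \partial^n f$. -/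
noncomputable section
open Polynomial

/-- The tensor product `Ω(λ,α,h) ⊗ Ω(λ,β)`, identified with `ℂ[∂₁,∂₂,t]`:
variable `0` is `∂₁`, variable `1` is `∂₂`, variable `2` is `t`. -/
abbrev P3 : Type := MvPolynomial (Fin 3) ℂ

/-- The embedding of `ℂ[t]` into `ℂ[∂₁,∂₂,t]` (the variable `t` is `X 2`). -/
def embt (f : ℂ[X]) : P3 := Polynomial.aeval (MvPolynomial.X (2 : Fin 3)) f

/-- The diagonal Virasoro action of `d_k` on `Ω(λ,α,h) ⊗ Ω(λ,β) = ℂ[∂₁,∂₂,t]`: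
on the monomial `∂₁^a t^c ⊗ ∂₂^b` it is
`d_k(∂₁^a t^c) ⊗ ∂₂^b + ∂₁^a t^c ⊗ d_k(∂₂^b)`, where
`d_k(∂₁^a t^c) = λ^k (∂₁-k)^a (∂₁ t^c + k G(t^c) - k² α F(t^c))` and
`d_k(∂₂^b) = λ^k (∂₂-k)^b (∂₂ - β k)`, extended linearly; `c` acts by `0`. -/
def tensorD (lam α β : ℂ) (h : ℂ[X]) (k : ℤ) (p : P3) : P3 :=
  lam ^ k • ∑ e ∈ p.support,
    MvPolynomial.C (MvPolynomial.coeff e p) *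
      ((MvPolynomial.X (0 : Fin 3) - MvPolynomial.C ((k : ℂ))) ^ (e 0) *
          (MvPolynomial.X (0 : Fin 3) * embt (Polynomial.X ^ (e 2))
            + MvPolynomial.C ((k : ℂ)) * embt (Gop h α (Polynomial.X ^ (e 2)))
            - MvPolynomial.C ((k : ℂ) ^ 2 * α) * embt (Fop h α (Polynomial.X ^ (e 2)))) *
          (MvPolynomial.X (1 : Fin 3)) ^ (e 1)
        + (MvPolynomial.X (0 : Fin 3)) ^ (e 0) * embt (Polynomial.X ^ (e 2)) *
            (MvPolynomial.X (1 : Fin 3) - MvPolynomial.C ((k : ℂ))) ^ (e 1) *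
            (MvPolynomial.X (1 : Fin 3) - MvPolynomial.C (β * k)))

/-- The subspace `W_m` of `Ω(λ,α,h) ⊗ Ω(λ,β) = ℂ[∂₁,∂₂,t]` spanned by
`{∂₁^l (∂₁+∂₂)^n f(t) : 0 ≤ l ≤ m, n ∈ ℤ≥0, f ∈ ℂ[t]}` (indexed by `m : ℤ`, so that
`W_{-1} = 0`). -/
def Wsub (m : ℤ) : Submodule ℂ P3 :=
  Submodule.span ℂ {q | ∃ (l n : ℕ) (f : ℂ[X]), (l : ℤ) ≤ m ∧
    q = (MvPolynomial.X (0 : Fin 3)) ^ l *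
      (MvPolynomial.X (0 : Fin 3) + MvPolynomial.X (1 : Fin 3)) ^ n * embt f}

namespace Aux8

abbrev A : Type := Polynomial ℂ[X]

def embtA : ℂ[X] →ₐ[ℂ] P3 := Polynomial.aeval (MvPolynomial.X (2 : Fin 3))

lemma embt_eq (f : ℂ[X]) : embt f = embtA f := rfl

/-- `τ : ℂ[∂₁,∂₂,t] → (ℂ[t][∂])[u]`, `∂₁ ↦ u`, `∂₂ ↦ ∂ - u`, `t ↦ t`. -/
def tau : P3 →ₐ[ℂ] Polynomial A :=
  MvPolynomial.aeval
    ![(X : Polynomial A), Polynomial.C (X : A) - X, Polynomial.C (Polynomial.C (X : ℂ[X]))]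

@[simp] lemma tau_X0 : tau (MvPolynomial.X 0) = (X : Polynomial A) := by
  simp [tau]
@[simp] lemma tau_X1 : tau (MvPolynomial.X 1) = Polynomial.C (X : A) - X := by
  simp [tau]
@[simp] lemma tau_X2 : tau (MvPolynomial.X 2) = Polynomial.C (Polynomial.C (X : ℂ[X])) := by
  simp [tau]

@[simp] lemma tau_embt (f : ℂ[X]) :
    tau (embt f) = Polynomial.C (Polynomial.C f) := by
  have : tau (embt f) = Polynomial.aeval (tau (MvPolynomial.X 2)) f := by
    rw [embt, aeval_algHom_apply]
  rw [this, tau_X2]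
  have h2 : (Polynomial.C (Polynomial.C (X : ℂ[X])) : Polynomial A)
      = (Polynomial.CAlgHom.comp Polynomial.CAlgHom : ℂ[X] →ₐ[ℂ] Polynomial A) X := rfl
  rw [h2, aeval_algHom_apply]
  simp [Polynomial.CAlgHom]

/-- coefficient extraction of `u^m` after `τ`. -/
def Phi0 (m : ℕ) : P3 →ₗ[ℂ] A :=
  ((Polynomial.lcoeff A m).restrictScalars ℂ).comp tau.toLinearMap

lemma Phi0_apply (m : ℕ) (p : P3) : Phi0 m p = (tau p).coeff m := rfl

def gen (l n : ℕ) (f : ℂ[X]) : P3 :=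
  (MvPolynomial.X (0 : Fin 3)) ^ l *
    (MvPolynomial.X (0 : Fin 3) + MvPolynomial.X (1 : Fin 3)) ^ n * embt f

lemma tau_gen (l n : ℕ) (f : ℂ[X]) :
    tau (gen l n f) = X ^ l * Polynomial.C ((X : A) ^ n * Polynomial.C f) := by
  simp only [gen, map_mul, map_pow, tau_embt, tau_X0, tau_X1, map_add]
  ring

lemma Phi0_gen (m l n : ℕ) (f : ℂ[X]) :
    Phi0 m (gen l n f) = if m = l then X ^ n * Polynomial.C f else 0 := by
  rw [Phi0_apply, tau_gen, mul_comm (X ^ l : Polynomial A), Polynomial.coeff_C_mul,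
    Polynomial.coeff_X_pow]
  split <;> simp

end Aux8

namespace Aux8

lemma gen_mem (m : ℤ) (l n : ℕ) (f : ℂ[X]) (hl : (l : ℤ) ≤ m) : gen l n f ∈ Wsub m :=
  Submodule.subset_span ⟨l, n, f, hl, rfl⟩

/-- `ξ : ℂ[t][∂] → ℂ[∂₁,∂₂,t]`, `∂ ↦ ∂₁+∂₂`, `t ↦ t`. -/
def xi : A →ₐ[ℂ] P3 :=
  Polynomial.eval₂AlgHom embtA
    (MvPolynomial.X (0 : Fin 3) + MvPolynomial.X (1 : Fin 3)) (fun _ => Commute.all _ _)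

@[simp] lemma xi_C (f : ℂ[X]) : xi (Polynomial.C f) = embt f := by
  simp [xi, embt_eq]

@[simp] lemma xi_X : xi (X : A) = MvPolynomial.X 0 + MvPolynomial.X 1 := by
  simp [xi]

def iota (m : ℕ) : A →ₗ[ℂ] P3 :=
  (LinearMap.mulLeft ℂ ((MvPolynomial.X (0 : Fin 3)) ^ m)).comp xi.toLinearMap

lemma iota_apply (m : ℕ) (g : A) :
    iota m g = (MvPolynomial.X (0 : Fin 3)) ^ m * xi g := rfl

lemma Phi0_vanish (m : ℕ) {p : P3} (hp : p ∈ Wsub ((m : ℤ) - 1)) : Phi0 m p = 0 := by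
  have : Wsub ((m : ℤ) - 1) ≤ LinearMap.ker (Phi0 m) := by
    rw [Wsub, Submodule.span_le]
    rintro q ⟨l, n, f, hl, rfl⟩
    have hlm : m ≠ l := by omega
    have := Phi0_gen m l n f
    simp only [hlm, if_false] at this
    simpa [LinearMap.mem_ker, gen] using this
  simpa [LinearMap.mem_ker] using this hp

lemma sub_iota_mem (m : ℕ) {p : P3} (hp : p ∈ Wsub (m : ℤ)) :
    p - iota m (Phi0 m p) ∈ Wsub ((m : ℤ) - 1) := by
  induction hp using Submodule.span_induction with
  | mem q hq =>
    obtain ⟨l, n, f, hl, rfl⟩ := hq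
    show gen l n f - iota m (Phi0 m (gen l n f)) ∈ _
    by_cases hml : m = l
    · subst hml
      have : iota m (Phi0 m (gen m n f)) = gen m n f := by
        rw [Phi0_gen, if_pos rfl, iota_apply, map_mul, map_pow, xi_X, xi_C, gen]
        ring
      rw [this, sub_self]
      exact Submodule.zero_mem _
    · rw [Phi0_gen]
      simp only [hml, if_false, map_zero, sub_zero]
      exact gen_mem _ _ _ _ (by omega)
  | zero => simp only [map_zero, sub_zero]; exact Submodule.zero_mem _
  | add a b _ _ ha hb =>
    have : a + b - iota m (Phi0 m (a + b)) =
        (a - iota m (Phi0 m a)) + (b - iota m (Phi0 m b)) := by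
      simp only [map_add]; ring
    rw [this]; exact Submodule.add_mem _ ha hb
  | smul c a _ ha =>
    have : c • a - iota m (Phi0 m (c • a)) = c • (a - iota m (Phi0 m a)) := by
      simp only [map_smul, smul_sub]
    rw [this]; exact Submodule.smul_mem _ _ ha

end Aux8

namespace Aux8

variable (α β : ℂ) (h : ℂ[X]) (k : ℤ)

def Te (e : Fin 3 →₀ ℕ) : P3 :=
  (MvPolynomial.X (0 : Fin 3) - MvPolynomial.C ((k : ℂ))) ^ (e 0) *
      (MvPolynomial.X (0 : Fin 3) * embt (Polynomial.X ^ (e 2))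
        + MvPolynomial.C ((k : ℂ)) * embt (Gop h α (Polynomial.X ^ (e 2)))
        - MvPolynomial.C ((k : ℂ) ^ 2 * α) * embt (Fop h α (Polynomial.X ^ (e 2)))) *
      (MvPolynomial.X (1 : Fin 3)) ^ (e 1)
    + (MvPolynomial.X (0 : Fin 3)) ^ (e 0) * embt (Polynomial.X ^ (e 2)) *
        (MvPolynomial.X (1 : Fin 3) - MvPolynomial.C ((k : ℂ))) ^ (e 1) *
        (MvPolynomial.X (1 : Fin 3) - MvPolynomial.C (β * k))

def TL : P3 →ₗ[ℂ] P3 :=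
  (Finsupp.lsum ℂ fun e => LinearMap.toSpanSingleton ℂ P3 (Te α β h k e)).comp
    (AddMonoidAlgebra.coeffLinearEquiv ℂ).toLinearMap

lemma TL_monomial (e : Fin 3 →₀ ℕ) (c : ℂ) :
    TL α β h k (MvPolynomial.monomial e c) = c • Te α β h k e := by
  rw [TL, LinearMap.comp_apply]
  have hc : (AddMonoidAlgebra.coeffLinearEquiv ℂ) (MvPolynomial.monomial e c) =
      Finsupp.single e c := rfl
  rw [LinearEquiv.coe_coe, hc]
  erw [Finsupp.lsum_single]
  exact LinearMap.toSpanSingleton_apply _ _ _ _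

lemma tensorD_eq_TL (lam : ℂ) (p : P3) :
    tensorD lam α β h k p = lam ^ k • TL α β h k p := by
  rw [tensorD]
  congr 1
  have : TL α β h k p = TL α β h k (∑ v ∈ p.support, MvPolynomial.monomial v
      (MvPolynomial.coeff v p)) := by rw [← MvPolynomial.as_sum]
  rw [this, map_sum]
  refine Finset.sum_congr rfl fun e he => ?_
  rw [TL_monomial, MvPolynomial.smul_eq_C_mul, Te]

lemma Te_tri (a b c : ℕ) :
    Te α β h k (Finsupp.single 0 a + Finsupp.single 1 b + Finsupp.single 2 c) =
      (MvPolynomial.X (0 : Fin 3) - MvPolynomial.C ((k : ℂ))) ^ a *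
          (MvPolynomial.X (0 : Fin 3) * embt (Polynomial.X ^ c)
            + MvPolynomial.C ((k : ℂ)) * embt (Gop h α (Polynomial.X ^ c))
            - MvPolynomial.C ((k : ℂ) ^ 2 * α) * embt (Fop h α (Polynomial.X ^ c))) *
          (MvPolynomial.X (1 : Fin 3)) ^ b
        + (MvPolynomial.X (0 : Fin 3)) ^ a * embt (Polynomial.X ^ c) *
            (MvPolynomial.X (1 : Fin 3) - MvPolynomial.C ((k : ℂ))) ^ b *
            (MvPolynomial.X (1 : Fin 3) - MvPolynomial.C (β * k)) := by
  have e0 : ((Finsupp.single (0 : Fin 3) a + Finsupp.single 1 b + Finsupp.single 2 c :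
      Fin 3 →₀ ℕ)) 0 = a := by simp
  have e1 : ((Finsupp.single (0 : Fin 3) a + Finsupp.single 1 b + Finsupp.single 2 c :
      Fin 3 →₀ ℕ)) 1 = b := by simp
  have e2 : ((Finsupp.single (0 : Fin 3) a + Finsupp.single 1 b + Finsupp.single 2 c :
      Fin 3 →₀ ℕ)) 2 = c := by simp
  rw [Te, e0, e1, e2]

lemma collapse (u v w : P3) (l n : ℕ) :
    ∑ j ∈ Finset.range (n + 1), (n.choose j : ℂ) • (u ^ (l + j) * v ^ (n - j) * w)
      = u ^ l * (u + v) ^ n * w := by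
  rw [add_pow, Finset.mul_sum, Finset.sum_mul]
  refine Finset.sum_congr rfl fun j hj => ?_
  rw [MvPolynomial.smul_eq_C_mul, ← MvPolynomial.C_eq_coe_nat, pow_add]
  ring

end Aux8

namespace Aux8

variable (α β : ℂ) (h : ℂ[X]) (k : ℤ)

lemma Fop_add (f g : ℂ[X]) : Fop h α (f + g) = Fop h α f + Fop h α g := by
  simp only [Fop, derivative_add, mul_add]; ring

lemma Fop_smul (a : ℂ) (f : ℂ[X]) : Fop h α (a • f) = a • Fop h α f := by
  simp only [Fop, derivative_smul, smul_sub, mul_smul_comm]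

lemma Gop_add (f g : ℂ[X]) : Gop h α (f + g) = Gop h α f + Gop h α g := by
  simp only [Gop, Fop_add, mul_add]; ring

lemma Gop_smul (a : ℂ) (f : ℂ[X]) : Gop h α (a • f) = a • Gop h α f := by
  simp only [Gop, Fop_smul, smul_add, mul_smul_comm]

@[simp] lemma embt_add (f g : ℂ[X]) : embt (f + g) = embt f + embt g := by
  simp [embt_eq, map_add]

@[simp] lemma embt_smul (a : ℂ) (f : ℂ[X]) : embt (a • f) = a • embt f := by
  simp [embt_eq]

/-- value of `d_k` on `gen l n f`, before scaling by `λ^k`. -/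
def TDval (l n : ℕ) (f : ℂ[X]) : P3 :=
  (MvPolynomial.X (0 : Fin 3) - MvPolynomial.C ((k : ℂ))) ^ l *
      (MvPolynomial.X (0 : Fin 3) + MvPolynomial.X (1 : Fin 3) - MvPolynomial.C ((k : ℂ))) ^ n *
      (MvPolynomial.X (0 : Fin 3) * embt f + MvPolynomial.C ((k : ℂ)) * embt (Gop h α f)
        - MvPolynomial.C ((k : ℂ) ^ 2 * α) * embt (Fop h α f))
    + (MvPolynomial.X (0 : Fin 3)) ^ l *
        (MvPolynomial.X (0 : Fin 3) + MvPolynomial.X (1 : Fin 3) - MvPolynomial.C ((k : ℂ))) ^ n *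
        embt f * (MvPolynomial.X (1 : Fin 3) - MvPolynomial.C (β * k))

lemma TL_gen (l n : ℕ) (f : ℂ[X]) :
    TL α β h k (gen l n f) = TDval α β h k l n f := by
  induction f using Polynomial.induction_on' with
  | add p q hp hq =>
    have hg : gen l n (p + q) = gen l n p + gen l n q := by
      rw [gen, gen, gen, embt_add, mul_add]
    rw [hg, map_add, hp, hq, TDval, TDval, TDval, Fop_add, Gop_add, embt_add, embt_add, embt_add]
    ring
  | monomial c a =>
    rw [← Polynomial.smul_X_eq_monomial]
    have hg : gen l n (a • Polynomial.X ^ c) = a • gen l n (Polynomial.X ^ c) := by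
      rw [gen, gen, embt_smul, mul_smul_comm]
    have hv : TDval α β h k l n (a • Polynomial.X ^ c)
        = a • TDval α β h k l n (Polynomial.X ^ c) := by
      rw [TDval, TDval, Fop_smul, Gop_smul, embt_smul, embt_smul, embt_smul]
      simp only [MvPolynomial.smul_eq_C_mul]
      ring
    rw [hg, map_smul, hv]
    congr 1
    -- core case `f = X ^ c`
    have hembt : embt (Polynomial.X ^ c) = MvPolynomial.X 2 ^ c := by
      simp [embt]
    have expand : gen l n (Polynomial.X ^ c) = ∑ j ∈ Finset.range (n + 1), (n.choose j : ℂ) •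
        MvPolynomial.monomial
          (Finsupp.single 0 (l + j) + Finsupp.single 1 (n - j) + Finsupp.single 2 c)
          (1 : ℂ) := by
      rw [gen, hembt, ← collapse]
      refine Finset.sum_congr rfl fun j hj => ?_
      congr 1
      rw [MvPolynomial.X_pow_eq_monomial, MvPolynomial.X_pow_eq_monomial,
        MvPolynomial.X_pow_eq_monomial, MvPolynomial.monomial_mul, MvPolynomial.monomial_mul]
      norm_num
    rw [expand, map_sum]
    simp only [map_smul, TL_monomial, one_smul, Te_tri, smul_add]
    rw [Finset.sum_add_distrib]
    have h1 : ∑ j ∈ Finset.range (n + 1), (n.choose j : ℂ) •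
        ((MvPolynomial.X (0 : Fin 3) - MvPolynomial.C ((k : ℂ))) ^ (l + j) *
          (MvPolynomial.X (0 : Fin 3) * embt (Polynomial.X ^ c)
            + MvPolynomial.C ((k : ℂ)) * embt (Gop h α (Polynomial.X ^ c))
            - MvPolynomial.C ((k : ℂ) ^ 2 * α) * embt (Fop h α (Polynomial.X ^ c))) *
          (MvPolynomial.X (1 : Fin 3)) ^ (n - j))
        = (MvPolynomial.X (0 : Fin 3) - MvPolynomial.C ((k : ℂ))) ^ l *
          ((MvPolynomial.X (0 : Fin 3) - MvPolynomial.C ((k : ℂ))) + MvPolynomial.X 1) ^ n *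
          (MvPolynomial.X (0 : Fin 3) * embt (Polynomial.X ^ c)
            + MvPolynomial.C ((k : ℂ)) * embt (Gop h α (Polynomial.X ^ c))
            - MvPolynomial.C ((k : ℂ) ^ 2 * α) * embt (Fop h α (Polynomial.X ^ c))) := by
      rw [← collapse]
      refine Finset.sum_congr rfl fun j hj => ?_
      congr 1
      ring
    have h2 : ∑ j ∈ Finset.range (n + 1), (n.choose j : ℂ) •
        ((MvPolynomial.X (0 : Fin 3)) ^ (l + j) * embt (Polynomial.X ^ c) *
          (MvPolynomial.X (1 : Fin 3) - MvPolynomial.C ((k : ℂ))) ^ (n - j) *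
          (MvPolynomial.X (1 : Fin 3) - MvPolynomial.C (β * k)))
        = (MvPolynomial.X (0 : Fin 3)) ^ l *
          (MvPolynomial.X 0 + (MvPolynomial.X 1 - MvPolynomial.C ((k : ℂ)))) ^ n *
          (embt (Polynomial.X ^ c) * (MvPolynomial.X (1 : Fin 3) - MvPolynomial.C (β * k))) := by
      rw [← collapse]
      refine Finset.sum_congr rfl fun j hj => ?_
      congr 1
      ring
    rw [h1, h2, TDval]
    ring

lemma tensorD_gen (lam : ℂ) (l n : ℕ) (f : ℂ[X]) :
    tensorD lam α β h k (gen l n f) = lam ^ k • TDval α β h k l n f := by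
  rw [tensorD_eq_TL, TL_gen]

end Aux8

namespace Aux8

variable (lam α β : ℂ) (h : ℂ[X]) (k : ℤ)

lemma Fop_zero : Fop h α 0 = 0 := by simp [Fop]
lemma Gop_zero : Gop h α 0 = 0 := by simp [Gop, Fop_zero]

lemma omegaD_zero : omegaD lam α h k 0 = 0 := by
  rw [omegaD, Polynomial.sum_zero_index, smul_zero]

lemma omegaD_fun_zero (i : ℕ) :
    ((X : Polynomial ℂ[X]) - Polynomial.C (C (k : ℂ))) ^ i *
      ((X : Polynomial ℂ[X]) * Polynomial.C (0 : ℂ[X]) +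
        Polynomial.C (C (k : ℂ) * Gop h α 0 - C ((k : ℂ) ^ 2 * α) * Fop h α 0)) = 0 := by
  simp [Fop_zero, Gop_zero]

lemma omegaD_add (p q : Polynomial ℂ[X]) :
    omegaD lam α h k (p + q) = omegaD lam α h k p + omegaD lam α h k q := by
  rw [omegaD, omegaD, omegaD, ← smul_add]
  congr 1
  apply Polynomial.sum_add_index
  · intro i; exact omegaD_fun_zero α h k i
  · intro i b₁ b₂
    rw [Fop_add, Gop_add]
    simp only [map_add, mul_add, add_sub_add_comm]
    ring
lemma omegaD_smul (c : ℂ) (p : Polynomial ℂ[X]) :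
    omegaD lam α h k (c • p) = c • omegaD lam α h k p := by
  have hc1 : ∀ x : ℂ[X], c • x = C c * x := fun x => by
    rw [Polynomial.smul_eq_C_mul]
  have hc2 : ∀ q : Polynomial ℂ[X], c • q = Polynomial.C (C c) * q := fun q => by
    rw [Algebra.smul_def]; simp [Polynomial.algebraMap_apply]
  rw [omegaD, omegaD, smul_comm]
  congr 1
  rw [Polynomial.sum_smul_index' p c _ (omegaD_fun_zero α h k), Polynomial.smul_sum]
  rw [Polynomial.sum_def, Polynomial.sum_def]
  refine Finset.sum_congr rfl fun i _ => ?_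
  rw [Fop_smul, Gop_smul]
  simp only [hc1, hc2, Polynomial.C_mul, Polynomial.C_sub]
  ring

lemma omegaD_XC (n : ℕ) (f : ℂ[X]) :
    omegaD lam α h k ((X : Polynomial ℂ[X]) ^ n * Polynomial.C f) =
      lam ^ k • (((X : Polynomial ℂ[X]) - Polynomial.C (C (k : ℂ))) ^ n *
        ((X : Polynomial ℂ[X]) * Polynomial.C f +
          Polynomial.C (C (k : ℂ) * Gop h α f - C ((k : ℂ) ^ 2 * α) * Fop h α f))) := by
  rw [mul_comm, Polynomial.C_mul_X_pow_eq_monomial, omegaD,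
    Polynomial.sum_monomial_index _ _ (omegaD_fun_zero α h k n)]

lemma hquot_shift (c : ℂ) : hquot (h - C c) α = hquot h α := by
  rw [hquot, hquot]
  congr 1
  simp only [eval_sub, eval_C, C_sub]
  ring

lemma Fop_shift (c : ℂ) (f : ℂ[X]) : Fop (h - C c) α f = Fop h α f := by
  rw [Fop, Fop, hquot_shift]

lemma Gop_shift (c : ℂ) (f : ℂ[X]) : Gop (h - C c) α f = Gop h α f - C c * f := by
  rw [Gop, Gop, Fop_shift]
  simp only [eval_sub, eval_C, C_sub]
  ring

end Aux8

namespace Aux8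

variable (α β : ℂ) (h : ℂ[X]) (k : ℤ)

lemma coeffA (γ a b d q r : A) {l m : ℕ} (hl : l ≤ m) :
    (((X : Polynomial A) - Polynomial.C γ) ^ l * Polynomial.C a *
        ((X : Polynomial A) * Polynomial.C b + Polynomial.C d) +
      (X : Polynomial A) ^ l * Polynomial.C q * (Polynomial.C r - (X : Polynomial A))).coeff m
      = if l = m then a * d - (m : A) * γ * (a * b) + q * r
        else if l + 1 = m then a * b - q else 0 := by
  have key : ((X : Polynomial A) - Polynomial.C γ) ^ l * Polynomial.C a *
        ((X : Polynomial A) * Polynomial.C b + Polynomial.C d) +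
      (X : Polynomial A) ^ l * Polynomial.C q * (Polynomial.C r - (X : Polynomial A))
      = ((X : Polynomial A) + Polynomial.C (-γ)) ^ (l + 1) * Polynomial.C (a * b)
        + ((X : Polynomial A) + Polynomial.C (-γ)) ^ l * Polynomial.C (γ * (a * b) + a * d)
        + (X : Polynomial A) ^ l * Polynomial.C (q * r)
        - (X : Polynomial A) ^ (l + 1) * Polynomial.C q := by
    simp only [Polynomial.C_neg, Polynomial.C_mul, Polynomial.C_add, pow_succ]
    ring
  rw [key]
  simp only [Polynomial.coeff_add, Polynomial.coeff_sub, Polynomial.coeff_mul_C,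
    Polynomial.coeff_X_add_C_pow, Polynomial.coeff_X_pow]
  rcases eq_or_lt_of_le hl with rfl | hlt
  · have c1 : (l + 1).choose l = l + 1 := Nat.choose_succ_self_right l
    have c2 : l.choose l = 1 := Nat.choose_self l
    rw [if_pos rfl, if_pos rfl, if_neg (by omega), c1, c2]
    have e1 : l + 1 - l = 1 := by omega
    have e2 : l - l = 0 := by omega
    rw [e1, e2]
    push_cast
    ring
  · rcases eq_or_lt_of_le (Nat.succ_le_of_lt hlt) with he | hlt2
    · -- l + 1 = m
      subst he
      simp only [Nat.choose_self, Nat.choose_succ_self, Nat.sub_self, pow_zero,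
        Nat.cast_zero, Nat.cast_one]
      simp only [if_true, if_neg (show ¬l = l.succ by omega), if_neg (show ¬l.succ = l by omega)]
      push_cast
      ring
    · rw [if_neg (by omega), if_neg (by omega), if_neg (by omega), if_neg (by omega)]
      rw [Nat.choose_eq_zero_of_lt (by omega), Nat.choose_eq_zero_of_lt (by omega)]
      push_cast
      ring

end Aux8

namespace Aux8

variable (lam α β : ℂ) (h : ℂ[X]) (k : ℤ)

@[simp] lemma tau_C (z : ℂ) :
    tau (MvPolynomial.C z) = Polynomial.C (Polynomial.C (Polynomial.C z)) := by
  simp [tau, MvPolynomial.algebraMap_eq, Polynomial.algebraMap_apply]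

lemma tau_TDval (l n : ℕ) (f : ℂ[X]) : tau (TDval α β h k l n f) =
    ((X : Polynomial A) - Polynomial.C (Polynomial.C (Polynomial.C ((k : ℂ))))) ^ l *
        Polynomial.C (((X : A) - Polynomial.C (Polynomial.C ((k : ℂ)))) ^ n) *
        ((X : Polynomial A) * Polynomial.C (Polynomial.C f) +
          Polynomial.C (Polynomial.C (Polynomial.C ((k : ℂ)) * Gop h α f
            - Polynomial.C ((k : ℂ) ^ 2 * α) * Fop h α f))) +
      (X : Polynomial A) ^ l *
        Polynomial.C (((X : A) - Polynomial.C (Polynomial.C ((k : ℂ)))) ^ n * Polynomial.C f) *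
        (Polynomial.C ((X : A) - Polynomial.C (Polynomial.C (β * (k : ℂ)))) - (X : Polynomial A))
    := by
  simp only [TDval, map_add, map_sub, map_mul, map_pow, tau_X0, tau_X1, tau_embt, tau_C,
    Polynomial.C_sub, Polynomial.C_mul, Polynomial.C_pow]
  ring

lemma inter_gen (m l n : ℕ) (hl : l ≤ m) (f : ℂ[X]) :
    Phi0 m (tensorD lam α β h k (gen l n f)) =
      omegaD lam α (h - C ((m : ℂ) + β)) k (Phi0 m (gen l n f)) := by
  rw [tensorD_gen, map_smul, Phi0_gen]
  have hco := coeffA (Polynomial.C (Polynomial.C ((k : ℂ))))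
    (((X : A) - Polynomial.C (Polynomial.C ((k : ℂ)))) ^ n)
    (Polynomial.C f)
    (Polynomial.C (Polynomial.C ((k : ℂ)) * Gop h α f - Polynomial.C ((k : ℂ) ^ 2 * α) * Fop h α f))
    (((X : A) - Polynomial.C (Polynomial.C ((k : ℂ)))) ^ n * Polynomial.C f)
    ((X : A) - Polynomial.C (Polynomial.C (β * (k : ℂ)))) hl
  have hPhi : Phi0 m (TDval α β h k l n f)
      = if l = m then
          (((X : A) - Polynomial.C (Polynomial.C ((k : ℂ)))) ^ n) *
            (Polynomial.C (Polynomial.C ((k : ℂ)) * Gop h α f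
              - Polynomial.C ((k : ℂ) ^ 2 * α) * Fop h α f))
            - (m : A) * Polynomial.C (Polynomial.C ((k : ℂ))) *
              ((((X : A) - Polynomial.C (Polynomial.C ((k : ℂ)))) ^ n) * Polynomial.C f)
            + (((X : A) - Polynomial.C (Polynomial.C ((k : ℂ)))) ^ n * Polynomial.C f) *
              ((X : A) - Polynomial.C (Polynomial.C (β * (k : ℂ))))
        else 0 := by
    rw [Phi0_apply, tau_TDval, hco]
    split
    · rfl
    · split
      · exact sub_self _
      · rfl
  rcases eq_or_ne l m with rfl | hlm
  · rw [hPhi, if_pos rfl, if_pos rfl, omegaD_XC]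
    congr 1
    rw [Gop_shift, Fop_shift]
    -- remaining: pure algebra in A
    simp only [Polynomial.C_sub, Polynomial.C_mul, Polynomial.C_add, ← Polynomial.C_eq_natCast]
    ring
  · rw [hPhi, if_neg hlm, if_neg (fun hh => hlm hh.symm), smul_zero, omegaD_zero]

end Aux8

namespace Aux8

variable (lam α β : ℂ) (h : ℂ[X]) (k : ℤ)

lemma inter_all (m : ℕ) {p : P3} (hp : p ∈ Wsub (m : ℤ)) :
    Phi0 m (tensorD lam α β h k p) =
      omegaD lam α (h - C ((m : ℂ) + β)) k (Phi0 m p) := by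
  induction hp using Submodule.span_induction with
  | mem q hq =>
    obtain ⟨l, n, f, hl, rfl⟩ := hq
    exact inter_gen lam α β h k m l n (by exact_mod_cast hl) f
  | zero =>
    simp only [tensorD_eq_TL, map_zero, smul_zero]
    exact (omegaD_zero lam α (h - C ((m : ℂ) + β)) k).symm
  | add a b _ _ hA hB =>
    have ht : tensorD lam α β h k (a + b) =
        tensorD lam α β h k a + tensorD lam α β h k b := by
      rw [tensorD_eq_TL, tensorD_eq_TL, tensorD_eq_TL, map_add, smul_add]
    rw [ht, map_add, hA, hB, map_add (Phi0 m) a b, omegaD_add]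
  | smul c a _ hA =>
    have ht : tensorD lam α β h k (c • a) = c • tensorD lam α β h k a := by
      rw [tensorD_eq_TL, tensorD_eq_TL, map_smul, smul_comm]
    rw [ht, map_smul, hA, map_smul (Phi0 m) c a, omegaD_smul]

end Aux8


open Aux8 in
/-- For `λ, α, β ∈ ℂ*`, `deg h = 1`, `m ∈ ℤ≥0` (with `W_{-1} = 0`), the quotient Virasoro
module `W_m / W_{m-1}` is isomorphic to `Ω(λ, α, h - m - β)` via
`∂₁^m (∂₁+∂₂)^n f + W_{m-1} ↦ ∂^n f`:  there is a `ℂ`-linear map `Φ : W_m → ℂ[t,∂]` with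
kernel `W_{m-1}`, surjective, intertwining the Virasoro actions, and sending
`∂₁^m (∂₁+∂₂)^n f` to `∂^n f`. -/
theorem stmt8 (lam α β : ℂ) (hlam : lam ≠ 0) (hα : α ≠ 0) (hβ : β ≠ 0)
    (h : ℂ[X]) (hh : h.degree = 1) (m : ℕ) :
    ∃ Φ : ↥(Wsub (m : ℤ)) →ₗ[ℂ] Polynomial ℂ[X],
      LinearMap.ker Φ = (Wsub ((m : ℤ) - 1)).comap (Wsub (m : ℤ)).subtype ∧
      Function.Surjective Φ ∧
      (∀ (k : ℤ) (x y : ↥(Wsub (m : ℤ))), (y : P3) = tensorD lam α β h k (x : P3) →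
        Φ y = omegaD lam α (h - C ((m : ℂ) + β)) k (Φ x)) ∧
      (∀ (n : ℕ) (f : ℂ[X]) (x : ↥(Wsub (m : ℤ))),
        (x : P3) = (MvPolynomial.X (0 : Fin 3)) ^ m *
            (MvPolynomial.X (0 : Fin 3) + MvPolynomial.X (1 : Fin 3)) ^ n * embt f →
        Φ x = (X : Polynomial ℂ[X]) ^ n * Polynomial.C f) := by

  refine ⟨(Phi0 m).comp (Wsub (m : ℤ)).subtype, ?_, ?_, ?_, ?_⟩
  · ext x
    simp only [LinearMap.mem_ker, LinearMap.comp_apply, Submodule.mem_comap,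
      Submodule.subtype_apply]
    constructor
    · intro h0
      have hs := sub_iota_mem m x.2
      rw [h0, map_zero, sub_zero] at hs
      exact hs
    · intro hx
      exact Phi0_vanish m hx
  · intro g
    induction g using Polynomial.induction_on' with
    | add p q hp hq =>
      obtain ⟨x, hx⟩ := hp
      obtain ⟨y, hy⟩ := hq
      exact ⟨x + y, by rw [map_add, hx, hy]⟩
    | monomial n f =>
      refine ⟨⟨gen m n f, gen_mem (m : ℤ) m n f le_rfl⟩, ?_⟩
      show Phi0 m (gen m n f) = _
      rw [Phi0_gen, if_pos rfl, mul_comm, Polynomial.C_mul_X_pow_eq_monomial]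
  · intro k x y hy
    show Phi0 m (y : P3) = omegaD lam α (h - C ((m : ℂ) + β)) k (Phi0 m (x : P3))
    rw [hy]
    exact inter_all lam α β h k m x.2
  · intro n f x hx
    show Phi0 m (x : P3) = _
    rw [hx]
    have hg := Phi0_gen m m n f
    rw [if_pos rfl] at hg
    exact hg
end
end
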